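/- arXiv:1407.0912 — 4 statements merged into one kernel-verified Lean document; each statement's English description precedes it below -/
import Mathlib

section
/- (Unfolding criterion for integrals, Prop. 3.3(iii).) Let ε > 0 and fix a partition of (0,1) for the parameter ε. Then for every φ ∈ L¹(R^ε) one has ∫_{(0,1)×Y*} (1/l([x]_ε)) · T_ε(φ)(x,y₁,y₂) dx dy₁ dy₂ = (1/ε) ∫_{R^ε} φ(x,y) dx dy, and ∫_{(0,1)×Y*} T_ε(φ)(x,y₁,y₂) dx dy₁ dy₂ = (1/ε) ∫_{R^ε} l([x]_ε) φ(x,y) dx dy. -/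
open MeasureTheory Set Filter Topology

noncomputable section

/-- The thin domain `R^ε = {(x,y) : x ∈ (0,1), 0 < y < ε G(x, x/ε)}`. -/
def thinDomain (G : ℝ → ℝ → ℝ) (ε : ℝ) : Set (ℝ × ℝ) :=
  {z : ℝ × ℝ | z.1 ∈ Ioo (0 : ℝ) 1 ∧ z.2 ∈ Ioo (0 : ℝ) (ε * G z.1 (z.1 / ε))}

/-- The reference cell `Y* = (0,l₁) × (0,G₁)`. -/
def Ystar (l1 G1 : ℝ) : Set (ℝ × ℝ) := Ioo (0 : ℝ) l1 ×ˢ Ioo (0 : ℝ) G1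

/-- A partition `0 = x₀ < x₁ < ⋯ < x_{N+1} = 1` of the interval `(0,1)` (for a parameter `ε`). -/
structure ThinPartition where
  N : ℕ
  pts : ℕ → ℝ
  pts_zero : pts 0 = 0
  pts_last : pts (N + 1) = 1
  pts_lt : ∀ k ≤ N, pts k < pts (k + 1)

/-- The index `k` such that `x ∈ [x_k, x_{k+1})` (for `x ∈ [0,1)`). -/
def ThinPartition.idx (P : ThinPartition) (x : ℝ) : ℕ :=
  Nat.findGreatest (fun k => P.pts k ≤ x) P.N

/-- `[x]_ε`, the partition point just below `x`. -/
def ThinPartition.bracket (P : ThinPartition) (x : ℝ) : ℝ := P.pts (P.idx x)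

/-- `Γ_{[x]_ε} = (x_{k+1} - x_k) / l(x_k)` for `x ∈ [x_k, x_{k+1})`. -/
def ThinPartition.Gamma (P : ThinPartition) (l : ℝ → ℝ) (x : ℝ) : ℝ :=
  (P.pts (P.idx x + 1) - P.pts (P.idx x)) / l (P.pts (P.idx x))

/-- The unfolding operator `T_ε` associated to a partition, acting on a function `φ` on `R^ε`
(extended by zero to all of `ℝ²` via the indicator of `R^ε`). -/
def unfoldOp (G : ℝ → ℝ → ℝ) (l : ℝ → ℝ) (ε : ℝ) (P : ThinPartition)
    (φ : ℝ × ℝ → ℝ) : ℝ × ℝ × ℝ → ℝ := fun q =>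
  if q.2.1 < l (P.bracket q.1) then
    (thinDomain G ε).indicator φ (P.bracket q.1 + P.Gamma l q.1 * q.2.1, ε * q.2.2)
  else 0

/-- The averaging operator `U_ε`, the formal adjoint of `T_ε`. -/
def avgOp (l : ℝ → ℝ) (ε : ℝ) (P : ThinPartition) (ψ : ℝ × ℝ × ℝ → ℝ) : ℝ × ℝ → ℝ := fun z =>
  (1 / l (P.bracket z.1)) *
    ∫ y₁ in Ioo (0 : ℝ) (l (P.bracket z.1)),
      ψ (P.bracket z.1 + P.Gamma l z.1 * y₁, (z.1 - P.bracket z.1) / P.Gamma l z.1, z.2 / ε)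

/-- The limit set `W = {(x,y₁,y₂) : x ∈ (0,1), 0 < y₁ < l(x), 0 < y₂ < G(x,y₁)}`. -/
def Wset (G : ℝ → ℝ → ℝ) (l : ℝ → ℝ) : Set (ℝ × ℝ × ℝ) :=
  {q | q.1 ∈ Ioo (0 : ℝ) 1 ∧ q.2.1 ∈ Ioo (0 : ℝ) (l q.1) ∧ q.2.2 ∈ Ioo (0 : ℝ) (G q.1 q.2.1)}

/-- The set `W₀ = {(x,y₁) : x ∈ (0,1), 0 < y₁ < l(x)}`. -/
def W0set (l : ℝ → ℝ) : Set (ℝ × ℝ) :=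
  {z : ℝ × ℝ | z.1 ∈ Ioo (0 : ℝ) 1 ∧ z.2 ∈ Ioo (0 : ℝ) (l z.1)}

/-! ### Auxiliary lemmas -/

theorem ThinPartition.pts_lt' (P : ThinPartition) : ∀ j ≤ P.N + 1, ∀ i < j, P.pts i < P.pts j := by
  intro j
  induction j with
  | zero => omega
  | succ k ih =>
    intro hk i hi
    have hk' : k ≤ P.N := by omega
    have h2 := P.pts_lt k hk'
    rcases Nat.lt_or_ge i k with h | h
    · exact (ih (by omega) i h).trans h2
    · have : i = k := by omega
      exact this ▸ h2

theorem ThinPartition.pts_le' (P : ThinPartition) {i j : ℕ} (hij : i ≤ j) (hj : j ≤ P.N + 1) :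
    P.pts i ≤ P.pts j := by
  rcases eq_or_lt_of_le hij with rfl | h
  · exact le_rfl
  · exact (P.pts_lt' j hj i h).le

theorem ThinPartition.pts_mem (P : ThinPartition) {k : ℕ} (hk : k ≤ P.N + 1) :
    P.pts k ∈ Icc (0:ℝ) 1 := by
  constructor
  · simpa [P.pts_zero] using P.pts_le' (Nat.zero_le k) hk
  · simpa [P.pts_last] using P.pts_le' hk le_rfl

theorem ThinPartition.idx_eq (P : ThinPartition) {k : ℕ} {x : ℝ} (hk : k ≤ P.N)
    (h1 : P.pts k ≤ x) (h2 : x < P.pts (k + 1)) : P.idx x = k := by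
  rw [ThinPartition.idx, Nat.findGreatest_eq_iff]
  refine ⟨hk, fun _ => h1, fun n hn1 hn2 => ?_⟩
  exact not_le.2 (h2.trans_le (P.pts_le' hn1 (by omega)))

theorem ThinPartition.idx_spec (P : ThinPartition) {x : ℝ} (h0 : 0 ≤ x) (h1 : x < 1) :
    P.idx x ≤ P.N ∧ P.pts (P.idx x) ≤ x ∧ x < P.pts (P.idx x + 1) := by
  have hle : P.idx x ≤ P.N := Nat.findGreatest_le _
  refine ⟨hle, ?_, ?_⟩
  · exact Nat.findGreatest_spec (P := fun k => P.pts k ≤ x) (Nat.zero_le _) (by simpa [P.pts_zero])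
  · by_contra h
    push_neg at h
    rcases Nat.lt_or_ge (P.idx x) P.N with hlt | hge
    · exact Nat.findGreatest_is_greatest (P := fun k => P.pts k ≤ x)
        (Nat.lt_succ_self _) hlt h
    · have : P.idx x = P.N := le_antisymm hle hge
      rw [this, P.pts_last] at h
      linarith

theorem prod_smul_vol (c d : NNReal) :
    ((c • (volume : Measure ℝ)).prod (d • (volume : Measure ℝ)))
      = (c * d) • ((volume : Measure ℝ).prod volume) := by
  refine Measure.prod_eq fun s t hs ht => ?_
  simp only [Measure.smul_apply, Measure.prod_prod, smul_eq_mul, ENNReal.smul_def,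
    ENNReal.coe_mul]
  ring

theorem map_mul_left_vol {a : ℝ} (ha : 0 < a) :
    Measure.map (fun x : ℝ => a * x) volume = (a⁻¹.toNNReal) • (volume : Measure ℝ) := by
  rw [show (fun x : ℝ => a * x) = (a * ·) from rfl, Real.map_volume_mul_left ha.ne',
    abs_of_pos (inv_pos.2 ha)]
  rw [ENNReal.smul_def, ENNReal.ofReal]

theorem map_affine_vol {a Γ e : ℝ} (hΓ : 0 < Γ) (he : 0 < e) :
    Measure.map (fun y : ℝ × ℝ => (a + Γ * y.1, e * y.2)) (volume : Measure (ℝ × ℝ))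
      = ENNReal.ofReal ((Γ * e)⁻¹) • (volume : Measure (ℝ × ℝ)) := by
  have hm1 : Measurable (fun x : ℝ => a + Γ * x) := (measurable_const_mul Γ).const_add a
  have hm2 : Measurable (fun x : ℝ => e * x) := measurable_const_mul e
  have h1 : Measure.map (fun x : ℝ => a + Γ * x) volume
      = (Γ⁻¹.toNNReal) • (volume : Measure ℝ) := by
    rw [show (fun x : ℝ => a + Γ * x) = (fun x : ℝ => a + x) ∘ (fun x : ℝ => Γ * x) from rfl,
      ← Measure.map_map (measurable_const_add a) (measurable_const_mul Γ),
      map_mul_left_vol hΓ, Measure.map_smul,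
      show (fun x : ℝ => a + x) = (a + ·) from rfl, map_add_left_eq_self volume a]
  rw [show (fun y : ℝ × ℝ => (a + Γ * y.1, e * y.2))
      = Prod.map (fun x : ℝ => a + Γ * x) (fun x : ℝ => e * x) from rfl,
    Measure.volume_eq_prod, ← Measure.map_prod_map _ _ hm1 hm2,
    h1, map_mul_left_vol he, prod_smul_vol, ENNReal.smul_def, ENNReal.coe_mul,
    mul_inv, ENNReal.ofReal_mul (by positivity), ENNReal.ofReal, ENNReal.ofReal,
    ← Measure.volume_eq_prod]

theorem isOpen_thinDomain (G : ℝ → ℝ → ℝ)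
    (hGcont : ContinuousOn (fun z : ℝ × ℝ => G z.1 z.2) (Ioo 0 1 ×ˢ (univ : Set ℝ)))
    (ε : ℝ) : IsOpen (thinDomain G ε) := by
  have hU : IsOpen ((Ioo (0:ℝ) 1) ×ˢ (univ : Set ℝ)) := (isOpen_Ioo).prod isOpen_univ
  have hF : ContinuousOn (fun z : ℝ × ℝ => ε * G z.1 (z.1 / ε) - z.2)
      ((Ioo (0:ℝ) 1) ×ˢ (univ : Set ℝ)) := by
    apply ContinuousOn.sub ?_ continuous_snd.continuousOn
    apply ContinuousOn.mul continuousOn_const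
    have hmap : Continuous (fun z : ℝ × ℝ => ((z.1, z.1 / ε) : ℝ × ℝ)) :=
      (continuous_fst).prodMk (continuous_fst.div_const ε)
    refine hGcont.comp hmap.continuousOn ?_
    rintro ⟨x, y⟩ ⟨hx, -⟩
    exact ⟨hx, trivial⟩
  have key : thinDomain G ε
      = ((Ioo (0:ℝ) 1) ×ˢ (univ : Set ℝ) ∩
          (fun z : ℝ × ℝ => ε * G z.1 (z.1 / ε) - z.2) ⁻¹' (Ioi 0)) ∩
        (Prod.snd ⁻¹' Ioi (0:ℝ)) := by
    ext ⟨x, y⟩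
    simp only [thinDomain, mem_setOf_eq, mem_Ioo, mem_inter_iff, mem_prod, mem_preimage,
      mem_Ioi, mem_univ, and_true]
    constructor
    · rintro ⟨hx, hy1, hy2⟩; exact ⟨⟨hx, by linarith⟩, hy1⟩
    · rintro ⟨⟨hx, h⟩, hy⟩; exact ⟨hx, hy, by linarith⟩
  rw [key]
  exact ((hF.isOpen_inter_preimage hU isOpen_Ioi)).inter (isOpen_Ioi.preimage continuous_snd)

theorem cov_rect {a Γ e : ℝ} (hΓ : 0 < Γ) (he : 0 < e) {L M : ℝ}
    (Φ : ℝ × ℝ → ℝ) (hΦ : Integrable Φ (volume : Measure (ℝ × ℝ))) :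
    ∫ y in (Ioo (0:ℝ) L) ×ˢ (Ioo (0:ℝ) M), Φ (a + Γ * y.1, e * y.2)
      = (Γ * e)⁻¹ * ∫ z in (Ioo a (a + Γ * L)) ×ˢ (Ioo (0:ℝ) (e * M)), Φ z := by
  set A : ℝ × ℝ → ℝ × ℝ := fun y => (a + Γ * y.1, e * y.2) with hA
  have hmA : Measurable A := ((measurable_fst.const_mul Γ).const_add a).prodMk
    (measurable_snd.const_mul e)
  have hmap := map_affine_vol (a := a) hΓ he
  have hR : MeasurableSet ((Ioo a (a + Γ * L)) ×ˢ (Ioo (0:ℝ) (e * M))) :=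
    measurableSet_Ioo.prod measurableSet_Ioo
  have hiff : ∀ y : ℝ × ℝ, y ∈ (Ioo (0:ℝ) L) ×ˢ (Ioo (0:ℝ) M)
      ↔ A y ∈ (Ioo a (a + Γ * L)) ×ˢ (Ioo (0:ℝ) (e * M)) := by
    rintro ⟨y1, y2⟩
    simp only [hA, mem_prod, mem_Ioo]
    constructor
    · rintro ⟨⟨h1, h2⟩, h3, h4⟩
      exact ⟨⟨by nlinarith, by nlinarith⟩, by nlinarith, by nlinarith⟩
    · rintro ⟨⟨h1, h2⟩, h3, h4⟩
      exact ⟨⟨by nlinarith, by nlinarith⟩, by nlinarith, by nlinarith⟩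
  have step1 : ∫ y in (Ioo (0:ℝ) L) ×ˢ (Ioo (0:ℝ) M), Φ (A y)
      = ∫ y, (((Ioo a (a + Γ * L)) ×ˢ (Ioo (0:ℝ) (e * M))).indicator Φ) (A y) := by
    rw [← integral_indicator (measurableSet_Ioo.prod measurableSet_Ioo)]
    congr 1
    funext y
    by_cases hy : y ∈ (Ioo (0:ℝ) L) ×ˢ (Ioo (0:ℝ) M)
    · rw [indicator_of_mem hy, indicator_of_mem ((hiff y).1 hy)]
    · rw [indicator_of_notMem hy, indicator_of_notMem (fun h => hy ((hiff y).2 h))]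
  have hind : Integrable (((Ioo a (a + Γ * L)) ×ˢ (Ioo (0:ℝ) (e * M))).indicator Φ)
      (volume : Measure (ℝ × ℝ)) := hΦ.integrableOn.integrable_indicator hR
  have step2 : ∫ y, (((Ioo a (a + Γ * L)) ×ˢ (Ioo (0:ℝ) (e * M))).indicator Φ) (A y)
      = ∫ z, (((Ioo a (a + Γ * L)) ×ˢ (Ioo (0:ℝ) (e * M))).indicator Φ) z
          ∂(Measure.map A volume) := by
    rw [integral_map hmA.aemeasurable]
    rw [hmap]
    exact hind.aestronglyMeasurable.mono_ac (Measure.absolutelyContinuous_of_le_smul le_rfl)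
  rw [step1, step2, hmap, integral_smul_measure, ENNReal.toReal_ofReal (by positivity),
    integral_indicator hR, smul_eq_mul]

theorem cover_ae {β : Type*} [MeasureSpace β] [SigmaFinite (volume : Measure β)]
    (P : ThinPartition) (T : Set β) :
    ((Ioo (0:ℝ) 1 ×ˢ T : Set (ℝ × β)))
      =ᵐ[volume] ⋃ k ∈ Finset.range (P.N + 1), ((Ioo (P.pts k) (P.pts (k+1)) ×ˢ T)) := by
  rw [ae_eq_set]
  constructor
  · apply measure_mono_null
      (t := (⋃ k ∈ Finset.range (P.N + 1), ({P.pts k} : Set ℝ)) ×ˢ (univ : Set β))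
    · rintro ⟨x, y⟩ ⟨⟨hx, hy⟩, hz⟩
      simp only [mem_Ioo] at hx
      obtain ⟨h1, h2, h3⟩ := P.idx_spec hx.1.le hx.2
      rcases eq_or_lt_of_le h2 with heq | hlt
      · refine ⟨?_, trivial⟩
        simp only [mem_iUnion, mem_singleton_iff, Finset.mem_range]
        exact ⟨P.idx x, by omega, heq.symm⟩
      · exfalso
        apply hz
        simp only [mem_iUnion, Finset.mem_range]
        exact ⟨P.idx x, by omega, ⟨hlt, h3⟩, hy⟩
    · rw [Measure.volume_eq_prod, Measure.prod_prod]
      have : volume (⋃ k ∈ Finset.range (P.N + 1), ({P.pts k} : Set ℝ)) = 0 :=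
        (Set.Finite.biUnion (Finset.finite_toSet _) fun k _ => finite_singleton _).measure_zero _
      rw [this, zero_mul]
  · have hsub : (⋃ k ∈ Finset.range (P.N + 1), ((Ioo (P.pts k) (P.pts (k+1)) ×ˢ T)))
        ⊆ (Ioo (0:ℝ) 1 ×ˢ T : Set (ℝ × β)) := by
      intro z hz
      simp only [mem_iUnion, Finset.mem_range] at hz
      obtain ⟨k, hk, ⟨hz1, hz2⟩⟩ := hz
      refine ⟨?_, hz2⟩
      simp only [mem_Ioo] at hz1 ⊢
      have h0 : 0 ≤ P.pts k := (P.pts_mem (by omega)).1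
      have h1 : P.pts (k+1) ≤ 1 := (P.pts_mem (by omega)).2
      exact ⟨lt_of_le_of_lt h0 hz1.1, lt_of_lt_of_le hz1.2 h1⟩
    rw [diff_eq_empty.2 hsub]
    exact measure_empty

theorem pieces_disj {β : Type*} (P : ThinPartition) (T : Set β) :
    Set.Pairwise ↑(Finset.range (P.N + 1))
      (Function.onFun Disjoint fun k => ((Ioo (P.pts k) (P.pts (k+1)) ×ˢ T) : Set (ℝ × β))) := by
  intro i hi j hj hij
  simp only [Finset.coe_range, mem_Iio] at hi hj
  have key : ∀ i j : ℕ, i < j → j < P.N + 1 →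
      Disjoint (Ioo (P.pts i) (P.pts (i+1))) (Ioo (P.pts j) (P.pts (j+1))) := by
    intro i j h hj
    rw [Set.Ioo_disjoint_Ioo]
    have : P.pts (i+1) ≤ P.pts j := P.pts_le' (by omega) (by omega)
    calc min (P.pts (i+1)) (P.pts (j+1)) ≤ P.pts (i+1) := min_le_left _ _
    _ ≤ max (P.pts i) (P.pts j) := le_trans this (le_max_right _ _)
  have hd : Disjoint (Ioo (P.pts i) (P.pts (i+1))) (Ioo (P.pts j) (P.pts (j+1))) := by
    rcases lt_or_gt_of_ne hij with h | h
    · exact key i j h hj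
    · exact (key j i h hi).symm
  exact Set.disjoint_prod.2 (Or.inl hd)

/-- Master computation: the unfolded integral with a piecewise-constant weight `c ∘ idx`. -/
theorem master_unfold
    (l0 l1 G0 G1 : ℝ) (hl0 : 0 < l0) (hl01 : l0 < l1) (hG0 : 0 < G0) (hG01 : G0 ≤ G1)
    (l : ℝ → ℝ)
    (hlb : ∀ x ∈ Icc (0 : ℝ) 1, l0 ≤ l x ∧ l x < l1)
    (G : ℝ → ℝ → ℝ)
    (hGcont : ContinuousOn (fun z : ℝ × ℝ => G z.1 z.2) (Ioo 0 1 ×ˢ (univ : Set ℝ)))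
    (ε : ℝ) (hε : 0 < ε) (P : ThinPartition)
    (φ : ℝ × ℝ → ℝ) (hφ : IntegrableOn φ (thinDomain G ε)) (c : ℕ → ℝ) :
    (∫ q in Ioo (0 : ℝ) 1 ×ˢ Ystar l1 G1, c (P.idx q.1) * unfoldOp G l ε P φ q)
      = ∑ k ∈ Finset.range (P.N + 1), (c k * l (P.pts k) / ε) *
          ∫ z in (Ioo (P.pts k) (P.pts (k+1))) ×ˢ Ioo (0:ℝ) (ε * G1),
            (thinDomain G ε).indicator φ z := by
  have hG1 : 0 < G1 := hG0.trans_le hG01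
  have hTD : MeasurableSet (thinDomain G ε) := (isOpen_thinDomain G hGcont ε).measurableSet
  set Φ : ℝ × ℝ → ℝ := (thinDomain G ε).indicator φ with hΦdef
  have hΦ : Integrable Φ volume := hφ.integrable_indicator hTD
  have hYm : MeasurableSet (Ystar l1 G1) := measurableSet_Ioo.prod measurableSet_Ioo
  have hLpos : ∀ k ≤ P.N + 1, 0 < l (P.pts k) ∧ l (P.pts k) < l1 := fun k hk =>
    ⟨hl0.trans_le (hlb _ (P.pts_mem hk)).1, (hlb _ (P.pts_mem hk)).2⟩
  -- abbreviations
  set g : ℕ → ℝ × ℝ → ℝ := fun k y =>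
    if y.1 < l (P.pts k) then
      Φ (P.pts k + (P.pts (k+1) - P.pts k) / l (P.pts k) * y.1, ε * y.2) else 0 with hgdef
  have hΓpos : ∀ k ≤ P.N, 0 < (P.pts (k+1) - P.pts k) / l (P.pts k) := fun k hk =>
    div_pos (sub_pos.2 (P.pts_lt k hk)) (hLpos k (by omega)).1
  have hpm : ∀ k ∈ Finset.range (P.N + 1),
      MeasurableSet ((Ioo (P.pts k) (P.pts (k+1))) ×ˢ Ystar l1 G1) := fun k _ =>
    measurableSet_Ioo.prod hYm
  -- pointwise identification on each piece
  have hEq : ∀ k ∈ Finset.range (P.N + 1),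
      EqOn (fun q : ℝ × ℝ × ℝ => (fun _ : ℝ => c k) q.1 * g k q.2)
        (fun q : ℝ × ℝ × ℝ => c (P.idx q.1) * unfoldOp G l ε P φ q)
        ((Ioo (P.pts k) (P.pts (k+1))) ×ˢ Ystar l1 G1) := by
    intro k hk q hq
    have hkN : k ≤ P.N := by simpa using Nat.lt_succ_iff.1 (Finset.mem_range.1 hk)
    have hidx : P.idx q.1 = k := P.idx_eq hkN hq.1.1.le hq.1.2
    simp only [unfoldOp, ThinPartition.bracket, ThinPartition.Gamma, hidx, hgdef, hΦdef]
  -- integrability of g k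
  have hgint : ∀ k ≤ P.N, Integrable (g k) volume := by
    intro k hk
    have hΓ := hΓpos k hk
    have hmap := map_affine_vol (a := P.pts k) hΓ hε
    have hΦA : Integrable (fun y : ℝ × ℝ =>
        Φ (P.pts k + (P.pts (k+1) - P.pts k) / l (P.pts k) * y.1, ε * y.2)) volume := by
      have hmA : Measurable (fun y : ℝ × ℝ =>
          ((P.pts k + (P.pts (k+1) - P.pts k) / l (P.pts k) * y.1, ε * y.2) : ℝ × ℝ)) :=
        ((measurable_fst.const_mul _).const_add _).prodMk (measurable_snd.const_mul ε)
      have hsm : AEStronglyMeasurable Φ (Measure.map (fun y : ℝ × ℝ =>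
          ((P.pts k + (P.pts (k+1) - P.pts k) / l (P.pts k) * y.1, ε * y.2) : ℝ × ℝ)) volume) := by
        rw [hmap]
        exact hΦ.aestronglyMeasurable.mono_ac (Measure.absolutelyContinuous_of_le_smul le_rfl)
      have := (integrable_map_measure hsm hmA.aemeasurable).1
        (by rw [hmap]; exact hΦ.smul_measure ENNReal.ofReal_ne_top)
      exact this
    have : g k = Set.indicator {y : ℝ × ℝ | y.1 < l (P.pts k)}
        (fun y : ℝ × ℝ =>
          Φ (P.pts k + (P.pts (k+1) - P.pts k) / l (P.pts k) * y.1, ε * y.2)) := by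
      funext y
      simp only [hgdef, Set.indicator_apply, mem_setOf_eq]
    rw [this]
    exact hΦA.indicator (measurable_fst measurableSet_Iio)
  -- integrability on each piece
  have hint : ∀ k ∈ Finset.range (P.N + 1),
      IntegrableOn (fun q : ℝ × ℝ × ℝ => c (P.idx q.1) * unfoldOp G l ε P φ q)
        ((Ioo (P.pts k) (P.pts (k+1))) ×ˢ Ystar l1 G1) := by
    intro k hk
    have hkN : k ≤ P.N := Nat.lt_succ_iff.1 (Finset.mem_range.1 hk)
    refine IntegrableOn.congr_fun ?_ (hEq k hk) (hpm k hk)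
    rw [IntegrableOn, Measure.volume_eq_prod, ← Measure.prod_restrict]
    exact Integrable.mul_prod
      ((integrableOn_const_iff (C := c k)).2 (Or.inr measure_Ioo_lt_top))
      ((hgint k hkN).integrableOn)
  rw [setIntegral_congr_set (cover_ae P (Ystar l1 G1)),
    integral_biUnion_finset (Finset.range (P.N + 1)) hpm (pieces_disj P _) hint]
  refine Finset.sum_congr rfl fun k hk => ?_
  have hkN : k ≤ P.N := Nat.lt_succ_iff.1 (Finset.mem_range.1 hk)
  have hL := hLpos k (by omega)
  have hΓ := hΓpos k hkN
  -- replace the integrand on the piece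
  rw [← setIntegral_congr_fun (hpm k hk) (hEq k hk)]
  -- split the product integral
  rw [Measure.volume_eq_prod,
    setIntegral_prod_mul (fun _ : ℝ => c k) (g k) (Ioo (P.pts k) (P.pts (k+1))) (Ystar l1 G1)]
  -- compute the inner integral over Y*
  have hSsub : (Ioo (0:ℝ) (l (P.pts k))) ×ˢ (Ioo (0:ℝ) G1) ⊆ Ystar l1 G1 :=
    Set.prod_mono (Ioo_subset_Ioo_right hL.2.le) subset_rfl
  have hSm : MeasurableSet ((Ioo (0:ℝ) (l (P.pts k))) ×ˢ (Ioo (0:ℝ) G1)) :=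
    measurableSet_Ioo.prod measurableSet_Ioo
  have hinner : ∫ y in Ystar l1 G1, g k y
      = ∫ y in (Ioo (0:ℝ) (l (P.pts k))) ×ˢ (Ioo (0:ℝ) G1),
          Φ (P.pts k + (P.pts (k+1) - P.pts k) / l (P.pts k) * y.1, ε * y.2) := by
    rw [show ∫ y in Ystar l1 G1, g k y
        = ∫ y in Ystar l1 G1, ((Ioo (0:ℝ) (l (P.pts k))) ×ˢ (Ioo (0:ℝ) G1)).indicator
            (fun y : ℝ × ℝ =>
              Φ (P.pts k + (P.pts (k+1) - P.pts k) / l (P.pts k) * y.1, ε * y.2)) y from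
      setIntegral_congr_fun hYm (by
        rintro ⟨y1, y2⟩ hy
        obtain ⟨hy1, hy2⟩ : y1 ∈ Ioo (0:ℝ) l1 ∧ y2 ∈ Ioo (0:ℝ) G1 := hy
        by_cases h : y1 < l (P.pts k)
        · have hmem : ((y1, y2) : ℝ × ℝ) ∈ (Ioo (0:ℝ) (l (P.pts k))) ×ˢ (Ioo (0:ℝ) G1) :=
            ⟨⟨hy1.1, h⟩, hy2⟩
          rw [Set.indicator_of_mem hmem]
          simp only [hgdef, if_pos h]
        · rw [Set.indicator_of_notMem (by
            rintro ⟨⟨-, hlt⟩, -⟩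
            exact h hlt)]
          simp only [hgdef, if_neg h])]
    rw [setIntegral_indicator hSm, Set.inter_eq_self_of_subset_right hSsub]
  have hLne : l (P.pts k) ≠ 0 := hL.1.ne'
  have hend : P.pts k + (P.pts (k+1) - P.pts k) / l (P.pts k) * l (P.pts k) = P.pts (k+1) := by
    field_simp
    ring
  rw [hinner, cov_rect hΓ hε Φ hΦ, hend, setIntegral_const,
    Real.volume_real_Ioo_of_le (P.pts_le' (by omega) (by omega))]
  have hcoef : (P.pts (k + 1) - P.pts k) * c k *
      ((P.pts (k + 1) - P.pts k) / l (P.pts k) * ε)⁻¹ = c k * l (P.pts k) / ε := by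
    have hd : P.pts (k+1) - P.pts k ≠ 0 := (sub_pos.2 (P.pts_lt k hkN)).ne'
    field_simp
  rw [smul_eq_mul, ← mul_assoc, hcoef]

/-- Unfolding criterion for integrals (Prop. 3.3(iii)). -/
theorem unfolding_criterion_for_integrals
    (l0 l1 G0 G1 : ℝ) (hl0 : 0 < l0) (hl01 : l0 < l1) (hG0 : 0 < G0) (hG01 : G0 ≤ G1)
    (l : ℝ → ℝ) (hlC1 : ContDiffOn ℝ 1 l (Ioo 0 1))
    (hlb : ∀ x ∈ Icc (0 : ℝ) 1, l0 ≤ l x ∧ l x < l1)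
    (G : ℝ → ℝ → ℝ)
    (hGcont : ContinuousOn (fun z : ℝ × ℝ => G z.1 z.2) (Ioo 0 1 ×ˢ (univ : Set ℝ)))
    (hGb : ∀ x ∈ Ioo (0 : ℝ) 1, ∀ y : ℝ, G0 ≤ G x y ∧ G x y ≤ G1)
    (hGper : ∀ x ∈ Ioo (0 : ℝ) 1, ∀ y : ℝ, G x (y + l x) = G x y)
    (ε : ℝ) (hε : 0 < ε) (P : ThinPartition)
    (φ : ℝ × ℝ → ℝ) (hφ : IntegrableOn φ (thinDomain G ε)) :
    (∫ q in Ioo (0 : ℝ) 1 ×ˢ Ystar l1 G1,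
        (1 / l (P.bracket q.1)) * unfoldOp G l ε P φ q)
      = (1 / ε) * ∫ z in thinDomain G ε, φ z ∧
    (∫ q in Ioo (0 : ℝ) 1 ×ˢ Ystar l1 G1, unfoldOp G l ε P φ q)
      = (1 / ε) * ∫ z in thinDomain G ε, l (P.bracket z.1) * φ z := by
  have hG1 : 0 < G1 := hG0.trans_le hG01
  have hTD : MeasurableSet (thinDomain G ε) := (isOpen_thinDomain G hGcont ε).measurableSet
  set Φ : ℝ × ℝ → ℝ := (thinDomain G ε).indicator φ with hΦdef
  have hΦ : Integrable Φ volume := hφ.integrable_indicator hTD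
  have hLpos : ∀ k ≤ P.N + 1, 0 < l (P.pts k) := fun k hk =>
    hl0.trans_le (hlb _ (P.pts_mem hk)).1
  have hTDsub : thinDomain G ε ⊆ Ioo (0:ℝ) 1 ×ˢ Ioo (0:ℝ) (ε * G1) := by
    rintro ⟨x, y⟩ ⟨hx, hy⟩
    refine ⟨hx, hy.1, lt_of_lt_of_le hy.2 ?_⟩
    exact mul_le_mul_of_nonneg_left (hGb x hx _).2 hε.le
  have hsm : ∀ k, MeasurableSet ((Ioo (P.pts k) (P.pts (k+1))) ×ˢ Ioo (0:ℝ) (ε * G1)) :=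
    fun k => measurableSet_Ioo.prod measurableSet_Ioo
  have hstrip : ∀ ψ : ℝ × ℝ → ℝ,
      (∀ k ∈ Finset.range (P.N + 1),
        IntegrableOn ψ ((Ioo (P.pts k) (P.pts (k+1))) ×ˢ Ioo (0:ℝ) (ε * G1))) →
      ∑ k ∈ Finset.range (P.N + 1),
          ∫ z in (Ioo (P.pts k) (P.pts (k+1))) ×ˢ Ioo (0:ℝ) (ε * G1), ψ z
        = ∫ z in Ioo (0:ℝ) 1 ×ˢ Ioo (0:ℝ) (ε * G1), ψ z := by
    intro ψ h
    rw [setIntegral_congr_set (cover_ae P (Ioo (0:ℝ) (ε * G1))),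
      integral_biUnion_finset (Finset.range (P.N + 1)) (fun k _ => hsm k) (pieces_disj P _) h]
  constructor
  · have hm := master_unfold l0 l1 G0 G1 hl0 hl01 hG0 hG01 l hlb G hGcont ε hε P φ hφ
      (fun k => 1 / l (P.pts k))
    simp only [ThinPartition.bracket]
    rw [hm]
    have hterm : ∀ k ∈ Finset.range (P.N + 1),
        (1 / l (P.pts k) * l (P.pts k) / ε) *
            ∫ z in (Ioo (P.pts k) (P.pts (k+1))) ×ˢ Ioo (0:ℝ) (ε * G1), Φ z
          = (1 / ε) * ∫ z in (Ioo (P.pts k) (P.pts (k+1))) ×ˢ Ioo (0:ℝ) (ε * G1), Φ z := by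
      intro k hk
      have hkN : k < P.N + 1 := Finset.mem_range.1 hk
      have hL := (hLpos k (by omega)).ne'
      rw [one_div, inv_mul_cancel₀ hL]
    rw [Finset.sum_congr rfl hterm, ← Finset.mul_sum,
      hstrip Φ (fun k _ => hΦ.integrableOn)]
    rw [hΦdef, setIntegral_indicator hTD, Set.inter_eq_self_of_subset_right hTDsub]
  · have hm := master_unfold l0 l1 G0 G1 hl0 hl01 hG0 hG01 l hlb G hGcont ε hε P φ hφ
      (fun _ => 1)
    simp only [one_mul] at hm
    rw [hm]
    set ψ : ℝ × ℝ → ℝ := fun z => l (P.bracket z.1) * Φ z with hψdef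
    have hterm : ∀ k ∈ Finset.range (P.N + 1),
        (l (P.pts k) / ε) *
            ∫ z in (Ioo (P.pts k) (P.pts (k+1))) ×ˢ Ioo (0:ℝ) (ε * G1), Φ z
          = (1 / ε) * ∫ z in (Ioo (P.pts k) (P.pts (k+1))) ×ˢ Ioo (0:ℝ) (ε * G1), ψ z := by
      intro k hk
      have hkN : k ≤ P.N := Nat.lt_succ_iff.1 (Finset.mem_range.1 hk)
      have hEq : EqOn (fun z : ℝ × ℝ => l (P.pts k) * Φ z) ψ
          ((Ioo (P.pts k) (P.pts (k+1))) ×ˢ Ioo (0:ℝ) (ε * G1)) := by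
        rintro ⟨x, y⟩ ⟨hx, -⟩
        have hidx : P.idx x = k := P.idx_eq hkN hx.1.le hx.2
        simp only [hψdef, ThinPartition.bracket, hidx]
      rw [← setIntegral_congr_fun (hsm k) hEq, integral_const_mul]
      ring
    rw [Finset.sum_congr rfl hterm, ← Finset.mul_sum]
    have hψint : ∀ k ∈ Finset.range (P.N + 1),
        IntegrableOn ψ ((Ioo (P.pts k) (P.pts (k+1))) ×ˢ Ioo (0:ℝ) (ε * G1)) := by
      intro k hk
      have hkN : k ≤ P.N := Nat.lt_succ_iff.1 (Finset.mem_range.1 hk)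
      refine IntegrableOn.congr_fun (hΦ.integrableOn.const_mul (l (P.pts k))) ?_ (hsm k)
      rintro ⟨x, y⟩ ⟨hx, -⟩
      have hidx : P.idx x = k := P.idx_eq hkN hx.1.le hx.2
      simp only [hψdef, ThinPartition.bracket, hidx]
    rw [hstrip ψ hψint]
    have hpt : ∀ z : ℝ × ℝ, ψ z
        = Set.indicator (thinDomain G ε) (fun z => l (P.bracket z.1) * φ z) z := by
      intro z
      by_cases h : z ∈ thinDomain G ε
      · simp [hψdef, hΦdef, Set.indicator_of_mem h]
      · simp [hψdef, hΦdef, Set.indicator_of_notMem h]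
    rw [setIntegral_congr_fun (measurableSet_Ioo.prod measurableSet_Ioo)
        (fun z _ => hpt z),
      setIntegral_indicator hTD, Set.inter_eq_self_of_subset_right hTDsub]
end
end

section
/- (Step (b) in the proof of Prop. 4.3.) Let l : (0,1) → ℝ be continuously differentiable with l(t) ≥ l_0 > 0 for all t. Let x ∈ (0,1) satisfy x·l'(x) ≠ l(x), and let y₁ ∈ (0, l(x)). Let ε_n → 0⁺, let p_n be natural numbers, and let a_n, b_n ∈ (0,1) with a_n < b_n, a_n → x, b_n → x, a_n = ε_n p_n l(a_n), and b_n = ε_n (p_n + 1) l(b_n). Set Γ_n := (b_n − a_n)/l(a_n). Then for all sufficiently large n the point a_n + Γ_n y₁ lies in (0,1), and (1/ε_n)·( a_n − l(a_n + Γ_n y₁)·a_n/l(a_n) ) → −(x·l'(x)/l(x))·(1 − x·l'(x)/l(x))^{−1} y₁ as n → ∞. -/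
open MeasureTheory Set Filter Topology

noncomputable section

lemma seq_slope {l : ℝ → ℝ} {D x : ℝ} (h : HasStrictDerivAt l D x)
    {u v : ℕ → ℝ} (hu : Tendsto u atTop (𝓝 x)) (hv : Tendsto v atTop (𝓝 x))
    (hne : ∀ n, u n ≠ v n) :
    Tendsto (fun n => (l (u n) - l (v n)) / (u n - v n)) atTop (𝓝 D) := by
  have ho := (hasStrictFDerivAt_iff_isLittleO.1 h.hasStrictFDerivAt).comp_tendsto
    (hu.prodMk_nhds hv)
  have ht : Tendsto (fun n => (l (u n) - l (v n) - (u n - v n) * D) / (u n - v n))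
      atTop (𝓝 0) := by
    apply Asymptotics.IsLittleO.tendsto_div_nhds_zero
    simpa [Function.comp_def] using ho
  have h2 := ht.add (tendsto_const_nhds (x := D))
  rw [zero_add] at h2
  refine h2.congr fun n => ?_
  have h0 : u n - v n ≠ 0 := sub_ne_zero.2 (hne n)
  field_simp
  ring

set_option maxHeartbeats 2000000 in
/-- Step (b) in the proof of Prop. 4.3. -/
theorem bracket_shift_limit
    (l0 : ℝ) (hl0 : 0 < l0)
    (l : ℝ → ℝ) (hlC1 : ContDiffOn ℝ 1 l (Ioo 0 1))
    (hlb : ∀ t ∈ Ioo (0 : ℝ) 1, l0 ≤ l t)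
    (x : ℝ) (hx : x ∈ Ioo (0 : ℝ) 1) (hnd : x * deriv l x ≠ l x)
    (ε : ℕ → ℝ) (hεpos : ∀ n, 0 < ε n) (hε : Tendsto ε atTop (𝓝 0))
    (p : ℕ → ℕ) (a b : ℕ → ℝ)
    (ha : ∀ n, a n ∈ Ioo (0 : ℝ) 1) (hb : ∀ n, b n ∈ Ioo (0 : ℝ) 1)
    (hab : ∀ n, a n < b n)
    (hax : Tendsto a atTop (𝓝 x)) (hbx : Tendsto b atTop (𝓝 x))
    (haeq : ∀ n, a n = ε n * (p n : ℝ) * l (a n))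
    (hbeq : ∀ n, b n = ε n * ((p n : ℝ) + 1) * l (b n))
    (y₁ : ℝ) (hy₁ : y₁ ∈ Ioo (0 : ℝ) (l x)) :
    (∀ᶠ n in atTop, a n + (b n - a n) / l (a n) * y₁ ∈ Ioo (0 : ℝ) 1) ∧
    Tendsto
      (fun n => (1 / ε n) *
        (a n - l (a n + (b n - a n) / l (a n) * y₁) * a n / l (a n)))
      atTop
      (𝓝 (-(x * deriv l x / l x) * (1 - x * deriv l x / l x)⁻¹ * y₁)) := by
  obtain ⟨hx0, hx1⟩ := hx
  have hLpos : 0 < l x := lt_of_lt_of_le hl0 (hlb x ⟨hx0, hx1⟩)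
  have hLne : l x ≠ 0 := hLpos.ne'
  have hla : ∀ n, 0 < l (a n) := fun n => lt_of_lt_of_le hl0 (hlb _ (ha n))
  have hlane : ∀ n, l (a n) ≠ 0 := fun n => (hla n).ne'
  have hεne : ∀ n, ε n ≠ 0 := fun n => (hεpos n).ne'
  have hmem : Ioo (0:ℝ) 1 ∈ 𝓝 x := Ioo_mem_nhds hx0 hx1
  have hcont : ContinuousAt l x := hlC1.continuousOn.continuousAt hmem
  have hstrict : HasStrictDerivAt l (deriv l x) x :=
    (hlC1.contDiffAt hmem).hasStrictDerivAt one_ne_zero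
  have hlat : Tendsto (fun n => l (a n)) atTop (𝓝 (l x)) := hcont.tendsto.comp hax
  have hlbt : Tendsto (fun n => l (b n)) atTop (𝓝 (l x)) := hcont.tendsto.comp hbx
  have hεpeq : ∀ n, ε n * (p n : ℝ) = a n / l (a n) := by
    intro n; exact (eq_div_iff (hlane n)).2 (haeq n).symm
  have hεp : Tendsto (fun n => ε n * (p n : ℝ)) atTop (𝓝 (x / l x)) := by
    simp only [hεpeq]; exact hax.div hlat hLne
  have habne : ∀ n, b n ≠ a n := fun n => (hab n).ne'
  have hsub : ∀ n, b n - a n ≠ 0 := fun n => sub_ne_zero.2 (habne n)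
  have hq : Tendsto (fun n => (l (b n) - l (a n)) / (b n - a n)) atTop (𝓝 (deriv l x)) :=
    seq_slope hstrict hbx hax habne
  have hlam1 : x * deriv l x / l x ≠ 1 := by
    intro h
    exact hnd ((div_eq_one_iff_eq hLne).1 h)
  have hεpq : Tendsto (fun n => ε n * (p n:ℝ) * ((l (b n) - l (a n)) / (b n - a n)))
      atTop (𝓝 (x * deriv l x / l x)) := by
    have h2 := hεp.mul hq
    have h3 : x / l x * deriv l x = x * deriv l x / l x := by ring
    rwa [h3] at h2
  have h1lam : (1:ℝ) - x * deriv l x / l x ≠ 0 := sub_ne_zero.2 (Ne.symm hlam1)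
  have hkey : ∀ n, (b n - a n) / ε n *
      (1 - ε n * (p n:ℝ) * ((l (b n) - l (a n)) / (b n - a n))) = l (b n) := by
    intro n
    have h2 : b n - a n = ε n * (p n:ℝ) * (l (b n) - l (a n)) + ε n * l (b n) := by
      calc b n - a n = ε n * ((p n:ℝ) + 1) * l (b n) - ε n * (p n:ℝ) * l (a n) := by
            rw [← haeq n, ← hbeq n]
        _ = ε n * (p n:ℝ) * (l (b n) - l (a n)) + ε n * l (b n) := by ring
    have e1 : (l (b n) - l (a n)) / (b n - a n) * (b n - a n) = l (b n) - l (a n) :=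
      div_mul_cancel₀ _ (hsub n)
    have h3 : (b n - a n) * (1 - ε n * (p n:ℝ) * ((l (b n) - l (a n)) / (b n - a n)))
        = ε n * l (b n) := by linear_combination h2 - ε n * (p n:ℝ) * e1
    rw [div_mul_eq_mul_div, h3, mul_div_cancel_left₀ _ (hεne n)]
  have hcev : ∀ᶠ n in atTop, (b n - a n) / ε n =
      l (b n) / (1 - ε n * (p n:ℝ) * ((l (b n) - l (a n)) / (b n - a n))) := by
    filter_upwards [hεpq.eventually_ne (by simpa using hlam1 :
        (x * deriv l x / l x : ℝ) ≠ 1)] with n hn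
    have hn' : (1:ℝ) - ε n * (p n:ℝ) * ((l (b n) - l (a n)) / (b n - a n)) ≠ 0 :=
      sub_ne_zero.2 (Ne.symm hn)
    rw [eq_div_iff hn', hkey n]
  have hct : Tendsto (fun n => (b n - a n) / ε n) atTop
      (𝓝 (l x / (1 - x * deriv l x / l x))) :=
    ((hlbt.div (tendsto_const_nhds.sub hεpq) h1lam)).congr' (hcev.mono fun n hn => hn.symm)
  have hΓt : Tendsto (fun n => (b n - a n) / l (a n)) atTop (𝓝 0) := by
    have h2 := (hbx.sub hax).div hlat hLne
    rw [sub_self, zero_div] at h2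
    exact h2
  have hst : Tendsto (fun n => a n + (b n - a n) / l (a n) * y₁) atTop (𝓝 x) := by
    have h2 := hax.add (hΓt.mul (tendsto_const_nhds (x := y₁)))
    simpa using h2
  have hev1 : ∀ᶠ n in atTop, a n + (b n - a n) / l (a n) * y₁ ∈ Ioo (0:ℝ) 1 :=
    hst.eventually_mem hmem
  refine ⟨hev1, ?_⟩
  have hΓypos : ∀ n, 0 < (b n - a n) / l (a n) * y₁ := fun n =>
    mul_pos (div_pos (sub_pos.2 (hab n)) (hla n)) hy₁.1
  have hsne : ∀ n, a n + (b n - a n) / l (a n) * y₁ ≠ a n := fun n => by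
    have := hΓypos n; intro h; nlinarith
  have hr : Tendsto (fun n => (l (a n + (b n - a n) / l (a n) * y₁) - l (a n)) /
      ((b n - a n) / l (a n) * y₁)) atTop (𝓝 (deriv l x)) := by
    have h2 := seq_slope hstrict hst hax hsne
    refine h2.congr fun n => ?_
    rw [add_sub_cancel_left]
  have hfinal : Tendsto (fun n => -((ε n * (p n:ℝ)) * (((b n - a n) / ε n) / l (a n)) *
      ((l (a n + (b n - a n) / l (a n) * y₁) - l (a n)) / ((b n - a n) / l (a n) * y₁)) * y₁))
      atTop (𝓝 (-((x / l x) * ((l x / (1 - x * deriv l x / l x)) / l x) * deriv l x * y₁))) :=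
    (((hεp.mul (hct.div hlat hLne)).mul hr).mul (tendsto_const_nhds (x := y₁))).neg
  have hval : -((x / l x) * ((l x / (1 - x * deriv l x / l x)) / l x) * deriv l x * y₁)
      = -(x * deriv l x / l x) * (1 - x * deriv l x / l x)⁻¹ * y₁ := by
    rw [div_right_comm, div_self hLne, one_div]
    ring
  rw [hval] at hfinal
  refine hfinal.congr fun n => ?_
  have hy₁ne : y₁ ≠ 0 := hy₁.1.ne'
  set La := l (a n) with hLa
  set Ls := l (a n + (b n - a n) / La * y₁) with hLs
  have hA : a n = ε n * (p n:ℝ) * La := haeq n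
  have hB : b n - a n ≠ 0 := hsub n
  rw [hA] at hB ⊢
  field_simp [hεne n, hlane n, hy₁ne, hB]
  ring
end
end

section
/- (Convergence of the unfolded microscopic variable, convergence (4.5) in the proof of Prop. 4.3.) Let l : (0,1) → ℝ be continuously differentiable with l(t) ≥ l_0 > 0 for all t. Let x ∈ (0,1) satisfy x·l'(x) ≠ l(x), and let y₁ ∈ (0, l(x)). Let ε_n → 0⁺, let p_n be natural numbers, and let a_n, b_n ∈ (0,1) with a_n < b_n, a_n → x, b_n → x, a_n = ε_n p_n l(a_n), and b_n = ε_n (p_n + 1) l(b_n). Set Γ_n := (b_n − a_n)/l(a_n). Then (1/ε_n)·( a_n − l(a_n + Γ_n y₁)·a_n/l(a_n) + Γ_n y₁ ) → y₁ as n → ∞. -/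
open MeasureTheory Set Filter Topology

noncomputable section

lemma slope_tendsto_aux {l : ℝ → ℝ} {x d : ℝ} (h : HasStrictDerivAt l d x)
    {u v : ℕ → ℝ} (hu : Tendsto u atTop (𝓝 x)) (hv : Tendsto v atTop (𝓝 x))
    (hne : ∀ n, u n ≠ v n) :
    Tendsto (fun n => (l (u n) - l (v n)) / (u n - v n)) atTop (𝓝 d) := by
  have hp : Tendsto (fun n => (u n, v n)) atTop (𝓝 (x, x)) := hu.prodMk_nhds hv
  have hlo := h.isLittleO.comp_tendsto hp
  have h0 : Tendsto (fun n => (l (u n) - l (v n) - (u n - v n) * d) / (u n - v n))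
      atTop (𝓝 0) := by
    have := hlo.tendsto_div_nhds_zero
    simpa [Function.comp, smul_eq_mul, mul_comm] using this
  have h1 := h0.add_const d
  rw [zero_add] at h1
  refine h1.congr fun n => ?_
  have hne' : u n - v n ≠ 0 := sub_ne_zero.2 (hne n)
  field_simp
  ring

/-- Convergence of the unfolded microscopic variable (convergence (4.5) in Prop. 4.3). -/
theorem unfolded_microscopic_variable_limit
    (l0 : ℝ) (hl0 : 0 < l0)
    (l : ℝ → ℝ) (hlC1 : ContDiffOn ℝ 1 l (Ioo 0 1))
    (hlb : ∀ t ∈ Ioo (0 : ℝ) 1, l0 ≤ l t)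
    (x : ℝ) (hx : x ∈ Ioo (0 : ℝ) 1) (hnd : x * deriv l x ≠ l x)
    (ε : ℕ → ℝ) (hεpos : ∀ n, 0 < ε n) (hε : Tendsto ε atTop (𝓝 0))
    (p : ℕ → ℕ) (a b : ℕ → ℝ)
    (ha : ∀ n, a n ∈ Ioo (0 : ℝ) 1) (hb : ∀ n, b n ∈ Ioo (0 : ℝ) 1)
    (hab : ∀ n, a n < b n)
    (hax : Tendsto a atTop (𝓝 x)) (hbx : Tendsto b atTop (𝓝 x))
    (haeq : ∀ n, a n = ε n * (p n : ℝ) * l (a n))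
    (hbeq : ∀ n, b n = ε n * ((p n : ℝ) + 1) * l (b n))
    (y₁ : ℝ) (hy₁ : y₁ ∈ Ioo (0 : ℝ) (l x)) :
    Tendsto
      (fun n => (1 / ε n) *
        (a n - l (a n + (b n - a n) / l (a n) * y₁) * a n / l (a n)
          + (b n - a n) / l (a n) * y₁))
      atTop (𝓝 y₁) := by

  obtain ⟨hx0, hx1⟩ := hx
  have hLpos : 0 < l x := lt_of_lt_of_le hl0 (hlb x ⟨hx0, hx1⟩)
  have hLne : l x ≠ 0 := hLpos.ne'
  have hmem : Ioo (0:ℝ) 1 ∈ 𝓝 x := Ioo_mem_nhds hx0 hx1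
  have hca : ContDiffAt ℝ 1 l x := hlC1.contDiffAt hmem
  have hstrict : HasStrictDerivAt l (deriv l x) x := hca.hasStrictDerivAt one_ne_zero
  have hcont : ContinuousAt l x := hca.continuousAt
  have hla : Tendsto (fun n => l (a n)) atTop (𝓝 (l x)) := hcont.tendsto.comp hax
  have hlbt : Tendsto (fun n => l (b n)) atTop (𝓝 (l x)) := hcont.tendsto.comp hbx
  have hlapos : ∀ n, 0 < l (a n) := fun n => lt_of_lt_of_le hl0 (hlb _ (ha n))
  have hq : Tendsto (fun n => a n / l (a n)) atTop (𝓝 (x / l x)) := hax.div hla hLne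
  have hD : Tendsto (fun n => (l (b n) - l (a n)) / (b n - a n)) atTop (𝓝 (deriv l x)) :=
    slope_tendsto_aux hstrict hbx hax (fun n => (hab n).ne')
  have hGamma : Tendsto (fun n => (b n - a n) / l (a n)) atTop (𝓝 0) := by
    have h1 : Tendsto (fun n => b n - a n) atTop (𝓝 0) := by
      simpa using hbx.sub hax
    simpa [Pi.div_def] using h1.div hla hLne
  have hGpos : ∀ n, 0 < (b n - a n) / l (a n) := fun n =>
    div_pos (sub_pos.2 (hab n)) (hlapos n)
  set u : ℕ → ℝ := fun n => a n + (b n - a n) / l (a n) * y₁ with hudef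
  have hux : Tendsto u atTop (𝓝 x) := by
    have := hax.add (hGamma.mul_const y₁)
    simpa using this
  have huane : ∀ n, u n ≠ a n := by
    intro n
    have h1 : 0 < (b n - a n) / l (a n) * y₁ := mul_pos (hGpos n) hy₁.1
    simp only [hudef]
    intro h
    nlinarith
  have hE : Tendsto (fun n => (l (u n) - l (a n)) / (u n - a n)) atTop (𝓝 (deriv l x)) :=
    slope_tendsto_aux hstrict hux hax huane
  have hdne : (1 : ℝ) - x / l x * deriv l x ≠ 0 := by
    rw [sub_ne_zero]
    intro h
    apply hnd
    field_simp at h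
    linarith
  have hden : Tendsto (fun n => 1 - a n / l (a n) * ((l (b n) - l (a n)) / (b n - a n)))
      atTop (𝓝 (1 - x / l x * deriv l x)) := tendsto_const_nhds.sub (hq.mul hD)
  have key : ∀ n, b n * l (a n) - a n * l (b n) = ε n * l (a n) * l (b n) := by
    intro n
    linear_combination l (a n) * hbeq n - l (b n) * haeq n
  have hRid : ∀ n, (b n - a n) / ε n *
      (1 - a n / l (a n) * ((l (b n) - l (a n)) / (b n - a n))) = l (b n) := by
    intro n
    have h1 : l (a n) ≠ 0 := (hlapos n).ne'
    have h2 : ε n ≠ 0 := (hεpos n).ne'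
    have h3 : b n - a n ≠ 0 := sub_ne_zero.2 (hab n).ne'
    have step : (b n - a n) / ε n *
        (1 - a n / l (a n) * ((l (b n) - l (a n)) / (b n - a n))) =
        (b n * l (a n) - a n * l (b n)) / (ε n * l (a n)) := by
      field_simp
      ring
    rw [step, key n]
    field_simp
  have hne_ev : ∀ᶠ n in atTop,
      1 - a n / l (a n) * ((l (b n) - l (a n)) / (b n - a n)) ≠ 0 :=
    hden.eventually_ne hdne
  have hR : Tendsto (fun n => (b n - a n) / ε n) atTop
      (𝓝 (l x / (1 - x / l x * deriv l x))) := by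
    refine (hlbt.div hden hdne).congr' ?_
    filter_upwards [hne_ev] with n hn
    simp only [Pi.div_apply]
    rw [div_eq_iff hn]
    exact (hRid n).symm
  have hfinal : ∀ n, (1 / ε n) *
      (a n - l (a n + (b n - a n) / l (a n) * y₁) * a n / l (a n)
        + (b n - a n) / l (a n) * y₁) =
      ((b n - a n) / ε n / l (a n)) *
        (y₁ * (1 - a n / l (a n) * ((l (u n) - l (a n)) / (u n - a n)))) := by
    intro n
    have h1 : l (a n) ≠ 0 := (hlapos n).ne'
    have h2 : ε n ≠ 0 := (hεpos n).ne'
    have h3 : b n - a n ≠ 0 := sub_ne_zero.2 (hab n).ne'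
    have h4 : y₁ ≠ 0 := hy₁.1.ne'
    have h5 : u n - a n = (b n - a n) / l (a n) * y₁ := by simp [hudef]
    rw [h5]
    show (1 / ε n) * (a n - l (u n) * a n / l (a n) + (b n - a n) / l (a n) * y₁) = _
    field_simp
    ring
  have H : Tendsto (fun n => ((b n - a n) / ε n / l (a n)) *
      (y₁ * (1 - a n / l (a n) * ((l (u n) - l (a n)) / (u n - a n))))) atTop
      (𝓝 ((l x / (1 - x / l x * deriv l x) / l x) *
        (y₁ * (1 - x / l x * deriv l x)))) :=
    (hR.div hla hLne).mul ((tendsto_const_nhds.sub (hq.mul hE)).const_mul y₁)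
  have hval : (l x / (1 - x / l x * deriv l x) / l x) *
      (y₁ * (1 - x / l x * deriv l x)) = y₁ := by
    have gen : ∀ t y L : ℝ, L ≠ 0 → 1 - t ≠ 0 → L / (1 - t) / L * (y * (1 - t)) = y := by
      intro t y L hL ht
      field_simp
    exact gen _ _ _ hLne hdne
  rw [hval] at H
  exact H.congr fun n => (hfinal n).symm
end
end

section
/- (U_ε is a left inverse of T_ε, Prop. 6.2(iii).) Let ε > 0, fix a partition of (0,1) for the parameter ε, let 1 ≤ p ≤ ∞ and let φ ∈ L^p(R^ε). Then U_ε(T_ε(φ))(x,y) = φ(x,y) for almost every (x,y) ∈ R^ε. -/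
open MeasureTheory Set Filter Topology

noncomputable section

namespace ThinPartition

lemma pts_lt_of_lt (P : ThinPartition) : ∀ j k, j < k → k ≤ P.N + 1 → P.pts j < P.pts k := by
  intro j k hjk hk
  induction k with
  | zero => omega
  | succ n ih =>
    rcases Nat.lt_or_ge j n with h | h
    · exact (ih h (by omega)).trans (P.pts_lt n (by omega))
    · have hjn : j = n := by omega
      subst hjn
      exact P.pts_lt j (by omega)

lemma pts_mono (P : ThinPartition) {j k : ℕ} (hjk : j ≤ k) (hk : k ≤ P.N + 1) :
    P.pts j ≤ P.pts k := by
  rcases eq_or_lt_of_le hjk with h | h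
  · subst h; exact le_rfl
  · exact (P.pts_lt_of_lt j k h hk).le

lemma idx_le (P : ThinPartition) (x : ℝ) : P.idx x ≤ P.N := Nat.findGreatest_le _

lemma pts_idx_le (P : ThinPartition) {x : ℝ} (hx : 0 ≤ x) : P.pts (P.idx x) ≤ x := by
  have h0 : P.pts 0 ≤ x := by rw [P.pts_zero]; exact hx
  exact Nat.findGreatest_spec (P := fun k => P.pts k ≤ x) (Nat.zero_le _) h0

lemma lt_pts_idx_succ (P : ThinPartition) {x : ℝ} (hx : x < 1) :
    x < P.pts (P.idx x + 1) := by
  rcases eq_or_lt_of_le (P.idx_le x) with h | h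
  · rw [show P.idx x + 1 = P.N + 1 by omega, P.pts_last]; exact hx
  · by_contra hle
    push_neg at hle
    have hgt : Nat.findGreatest (fun k => P.pts k ≤ x) P.N < P.idx x + 1 :=
      Nat.lt_succ_self _
    exact Nat.findGreatest_is_greatest hgt (by omega) hle

lemma idx_eq_s15 (P : ThinPartition) {k : ℕ} {x : ℝ} (hk : k ≤ P.N)
    (h1 : P.pts k ≤ x) (h2 : x < P.pts (k + 1)) : P.idx x = k := by
  have h0 : (0 : ℝ) ≤ x := by
    have := P.pts_mono (j := 0) (k := k) (Nat.zero_le _) (by omega)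
    rw [P.pts_zero] at this; linarith
  have hx1 : x < 1 := by
    have := P.pts_mono (j := k + 1) (k := P.N + 1) (by omega) le_rfl
    rw [P.pts_last] at this; linarith
  have hidxN : P.idx x ≤ P.N := P.idx_le x
  have hA : P.pts (P.idx x) ≤ x := P.pts_idx_le h0
  have hB : x < P.pts (P.idx x + 1) := P.lt_pts_idx_succ hx1
  rcases Nat.lt_trichotomy (P.idx x) k with h | h | h
  · have : P.pts (P.idx x + 1) ≤ P.pts k := P.pts_mono (by omega) (by omega)
    linarith
  · exact h
  · have : P.pts (k + 1) ≤ P.pts (P.idx x) := P.pts_mono (by omega) (by omega)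
    linarith

end ThinPartition

/-- `U_ε` is a left inverse of `T_ε` (Prop. 6.2(iii)). -/
theorem averaging_left_inverse_unfolding
    (l0 l1 G0 G1 : ℝ) (hl0 : 0 < l0) (hl01 : l0 < l1) (hG0 : 0 < G0) (hG01 : G0 ≤ G1)
    (l : ℝ → ℝ) (hlC1 : ContDiffOn ℝ 1 l (Ioo 0 1))
    (hlb : ∀ x ∈ Icc (0 : ℝ) 1, l0 ≤ l x ∧ l x < l1)
    (G : ℝ → ℝ → ℝ)
    (hGcont : ContinuousOn (fun z : ℝ × ℝ => G z.1 z.2) (Ioo 0 1 ×ˢ (univ : Set ℝ)))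
    (hGb : ∀ x ∈ Ioo (0 : ℝ) 1, ∀ y : ℝ, G0 ≤ G x y ∧ G x y ≤ G1)
    (hGper : ∀ x ∈ Ioo (0 : ℝ) 1, ∀ y : ℝ, G x (y + l x) = G x y)
    (ε : ℝ) (hε : 0 < ε) (P : ThinPartition)
    (p : ENNReal) (hp : 1 ≤ p)
    (φ : ℝ × ℝ → ℝ) (hφ : MemLp φ p (volume.restrict (thinDomain G ε))) :
    ∀ᵐ z ∂volume.restrict (thinDomain G ε),
      avgOp l ε P (unfoldOp G l ε P φ) z = φ z := by
  -- thinDomain is open, hence measurable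
  have hcont : ContinuousOn (fun z : ℝ × ℝ => z.2 - ε * G z.1 (z.1 / ε))
      (Ioo 0 1 ×ˢ (univ : Set ℝ)) := by
    apply ContinuousOn.sub continuous_snd.continuousOn
    apply ContinuousOn.mul continuousOn_const
    have hinner : Continuous (fun z : ℝ × ℝ => (z.1, z.1 / ε)) := by continuity
    have hmaps : MapsTo (fun z : ℝ × ℝ => (z.1, z.1 / ε)) (Ioo 0 1 ×ˢ (univ : Set ℝ))
        (Ioo 0 1 ×ˢ (univ : Set ℝ)) := fun z hz => ⟨hz.1, mem_univ _⟩
    exact hGcont.comp hinner.continuousOn hmaps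
  have hopen : IsOpen (thinDomain G ε) := by
    have h1 : IsOpen ((Ioo (0:ℝ) 1 ×ˢ (univ : Set ℝ)) ∩
        (fun z : ℝ × ℝ => z.2 - ε * G z.1 (z.1 / ε)) ⁻¹' Iio 0) :=
      hcont.isOpen_inter_preimage (isOpen_Ioo.prod isOpen_univ) isOpen_Iio
    have h2 : IsOpen {z : ℝ × ℝ | 0 < z.2} := isOpen_lt continuous_const continuous_snd
    have : thinDomain G ε = ((Ioo (0:ℝ) 1 ×ˢ (univ : Set ℝ)) ∩
        (fun z : ℝ × ℝ => z.2 - ε * G z.1 (z.1 / ε)) ⁻¹' Iio 0) ∩ {z : ℝ × ℝ | 0 < z.2} := by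
      ext z
      simp only [thinDomain, mem_setOf_eq, mem_Ioo, mem_inter_iff, mem_prod, mem_univ,
        and_true, mem_preimage, mem_Iio]
      constructor
      · rintro ⟨hx, hy1, hy2⟩; exact ⟨⟨hx, by linarith⟩, hy1⟩
      · rintro ⟨⟨hx, hy2⟩, hy1⟩; exact ⟨hx, hy1, by linarith⟩
    rw [this]
    exact h1.inter h2
  filter_upwards [ae_restrict_mem hopen.measurableSet] with z hz
  obtain ⟨hx, hy⟩ := hz
  set x := z.1 with hxdef
  set k := P.idx x with hkdef
  have hkN : k ≤ P.N := P.idx_le x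
  have hb0 : (0:ℝ) ≤ P.pts k := by
    have := P.pts_mono (j := 0) (k := k) (Nat.zero_le _) (by omega)
    rwa [P.pts_zero] at this
  have hb1 : P.pts k ≤ 1 := by
    have := P.pts_mono (j := k) (k := P.N + 1) (by omega) le_rfl
    rwa [P.pts_last] at this
  have hlb' : l0 ≤ l (P.pts k) := (hlb _ ⟨hb0, hb1⟩).1
  have hlpos : 0 < l (P.pts k) := lt_of_lt_of_le hl0 hlb'
  have hbx : P.pts k ≤ x := P.pts_idx_le hx.1.le
  have hxb : x < P.pts (k + 1) := P.lt_pts_idx_succ hx.2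
  have hbrk : P.bracket x = P.pts k := rfl
  set Γ := P.Gamma l x with hΓdef
  have hΓ : Γ = (P.pts (k + 1) - P.pts k) / l (P.pts k) := rfl
  have hΓpos : 0 < Γ := by
    rw [hΓ]
    exact div_pos (by have := P.pts_lt k hkN; linarith) hlpos
  have hΓl : Γ * l (P.pts k) = P.pts (k + 1) - P.pts k := by
    rw [hΓ]; field_simp
  -- the integrand is constant equal to φ z on Ioo 0 (l (P.pts k))
  have hconst : ∀ y₁ ∈ Ioo (0:ℝ) (l (P.bracket x)),
      unfoldOp G l ε P φ
        (P.bracket x + P.Gamma l x * y₁, (x - P.bracket x) / P.Gamma l x, z.2 / ε) = φ z := by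
    intro y₁ hy₁
    rw [hbrk] at hy₁ ⊢
    have hidx : P.idx (P.pts k + Γ * y₁) = k := by
      apply P.idx_eq_s15 hkN
      · nlinarith [hy₁.1, hΓpos]
      · nlinarith [hy₁.2, hΓpos, hΓl]
    have hbrk2 : P.bracket (P.pts k + Γ * y₁) = P.pts k := by
      simp [ThinPartition.bracket, hidx]
    have hΓ2 : P.Gamma l (P.pts k + Γ * y₁) = Γ := by
      simp only [ThinPartition.Gamma, hidx]
      exact hΓ.symm
    have hcond : (x - P.pts k) / Γ < l (P.pts k) := by
      rw [div_lt_iff₀ hΓpos]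
      nlinarith [hΓl]
    simp only [unfoldOp, ← hΓdef, hbrk2, hΓ2]
    rw [if_pos hcond]
    have harg : (P.pts k + Γ * ((x - P.pts k) / Γ), ε * (z.2 / ε)) = z := by
      have h1 : Γ * ((x - P.pts k) / Γ) = x - P.pts k := by
        field_simp
      have h2 : ε * (z.2 / ε) = z.2 := by
        field_simp
      rw [h1, h2]
      simp [hxdef]
    rw [harg]
    have hzmem : z ∈ thinDomain G ε := ⟨hx, hy⟩
    exact indicator_of_mem hzmem φ
  -- compute the integral
  simp only [avgOp]
  rw [setIntegral_congr_fun measurableSet_Ioo hconst, setIntegral_const]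
  rw [hbrk, measureReal_def, Real.volume_Ioo, sub_zero, ENNReal.toReal_ofReal hlpos.le]
  simp only [smul_eq_mul]
  field_simp
end
end
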